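/- With the Fibonacci-graph sequences as above, the total G_3-Catalan number satisfies c_n = c_n(1) + c_n(2) = (2/(n+1))·binom(3n, n) for n ≥ 1; in particular c_1 = 3, c_2 = 10, c_3 = 42, c_4 = 198. -/
import Mathlib


open Finset

/-- Forests of `x` ternary trees with `n` nodes (ℚ-valued closed form). -/
noncomputable def fgc (n x : ℕ) : ℚ :=
  if n = 0 then 1 else x * ((x + 3 * n).choose n) / (x + 3 * n)

lemma fgc_zero_left (x : ℕ) : fgc 0 x = 1 := by simp [fgc]

lemma fgc_zero_right (n : ℕ) (hn : n ≠ 0) : fgc n 0 = 0 := by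
  simp [fgc, hn]

lemma fgc_val (n x : ℕ) (h : n ≠ 0 ∨ x ≠ 0) :
    fgc n x = x * ((x + 3 * n).choose n) / (x + 3 * n) := by
  rcases Nat.eq_zero_or_pos n with hn | hn
  · subst hn
    rcases h with h | h
    · exact absurd rfl h
    · simp [fgc]
      rw [div_self]
      exact_mod_cast h
  · rw [fgc, if_neg (Nat.pos_iff_ne_zero.mp hn)]

lemma cast_choose' (m k : ℕ) :
    (((k + m).choose k : ℕ) : ℚ) = (Nat.factorial (k+m)) / ((Nat.factorial k) * (Nat.factorial m)) := by
  exact_mod_cast Nat.cast_add_choose ℚ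

/-- The Pascal-type recurrence for `fgc`. -/
lemma fgc_pascal (n x : ℕ) : fgc (n + 1) (x + 1) = fgc (n + 1) x + fgc n (x + 3) := by
  have e1 : (x + 1) + 3 * (n + 1) = (n + 1) + (x + 2 * n + 3) := by ring
  have e2 : x + 3 * (n + 1) = (n + 1) + (x + 2 * n + 2) := by ring
  have e3 : (x + 3) + 3 * n = n + (x + 2 * n + 3) := by ring
  rw [fgc_val _ _ (Or.inl (Nat.succ_ne_zero n)), fgc_val _ _ (Or.inl (Nat.succ_ne_zero n)),
    fgc_val n (x + 3) (Or.inr (by omega)), e1, e2, e3, cast_choose', cast_choose', cast_choose']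
  have g1 : (n + 1) + (x + 2 * n + 3) = (x + 3 * n + 2) + 1 + 1 := by ring
  have g2 : (n + 1) + (x + 2 * n + 2) = (x + 3 * n + 2) + 1 := by ring
  have g3 : n + (x + 2 * n + 3) = (x + 3 * n + 2) + 1 := by ring
  have g4 : x + 2 * n + 3 = (x + 2 * n + 2) + 1 := by ring
  rw [g1, g2, g3, g4]
  simp only [Nat.factorial_succ]
  have hf1 : ((Nat.factorial n : ℕ) : ℚ) ≠ 0 := Nat.cast_ne_zero.mpr (Nat.factorial_ne_zero _)
  have hf2 : ((Nat.factorial (x + 2 * n + 2) : ℕ) : ℚ) ≠ 0 :=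
    Nat.cast_ne_zero.mpr (Nat.factorial_ne_zero _)
  have hf3 : ((Nat.factorial (x + 3 * n + 2) : ℕ) : ℚ) ≠ 0 :=
    Nat.cast_ne_zero.mpr (Nat.factorial_ne_zero _)
  have d1 : (x : ℚ) + 3 * n + 4 ≠ 0 := by positivity
  have d2 : (x : ℚ) + 3 * n + 3 ≠ 0 := by positivity
  have d3 : (n : ℚ) + 1 ≠ 0 := by positivity
  have d4 : (x : ℚ) + 2 * n + 3 ≠ 0 := by positivity
  push_cast
  field_simp
  ring

example : True := trivial

/-- Rothe–Hagen style convolution for `fgc`. -/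
lemma fgc_conv (n : ℕ) : ∀ x y : ℕ,
    ∑ k ∈ Finset.range (n + 1), fgc k x * fgc (n - k) y = fgc n (x + y) := by
  induction n with
  | zero => intro x y; simp [fgc]
  | succ n ih =>
    intro x y
    induction y with
    | zero =>
      rw [Finset.sum_eq_single (n + 1)]
      · simp [fgc_zero_left]
      · intro k hk hne
        have hk' : k ≤ n := by
          have := Finset.mem_range.mp hk; omega
        rw [fgc_zero_right (n + 1 - k) (by omega), mul_zero]
      · intro h; exact absurd (Finset.self_mem_range_succ (n + 1)) h
    | succ y ihy =>
      rw [Finset.sum_range_succ]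
      have step : ∀ k ∈ Finset.range (n + 1),
          fgc k x * fgc (n + 1 - k) (y + 1)
            = fgc k x * fgc (n + 1 - k) y + fgc k x * fgc (n - k) (y + 3) := by
        intro k hk
        have hk' : k ≤ n := by have := Finset.mem_range.mp hk; omega
        have h1 : n + 1 - k = (n - k) + 1 := by omega
        rw [h1, fgc_pascal (n - k) y]
        ring
      rw [Finset.sum_congr rfl step, Finset.sum_add_distrib]
      have A : (∑ k ∈ Finset.range (n + 1), fgc k x * fgc (n + 1 - k) y)
            + fgc (n + 1) x
          = fgc (n + 1) (x + y) := by
        have h := ihy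
        rw [Finset.sum_range_succ] at h
        simpa [Nat.sub_self, fgc_zero_left] using h
      have B : (∑ k ∈ Finset.range (n + 1), fgc k x * fgc (n - k) (y + 3))
          = fgc n (x + (y + 3)) := ih x (y + 3)
      have hx3 : x + (y + 3) = (x + y) + 3 := by ring
      have hx1 : x + (y + 1) = (x + y) + 1 := by ring
      rw [B, hx3, hx1, fgc_pascal n (x + y), Nat.sub_self, fgc_zero_left]
      linarith [A]

lemma fgc_closed (n : ℕ) (hn : n ≠ 0) :
    fgc n 2 + fgc n 1 = 2 / ((n : ℚ) + 1) * ((3 * n).choose n) := by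
  rw [fgc_val n 2 (Or.inl hn), fgc_val n 1 (Or.inl hn)]
  have e1 : 2 + 3 * n = n + (2 * n + 2) := by ring
  have e2 : 1 + 3 * n = n + (2 * n + 1) := by ring
  have e3 : 3 * n = n + (2 * n) := by ring
  rw [e1, e2, e3, cast_choose', cast_choose', cast_choose']
  have g1 : n + (2 * n + 2) = n + 2 * n + 1 + 1 := by ring
  have g2 : n + (2 * n + 1) = n + 2 * n + 1 := by ring
  have g3 : 2 * n + 2 = 2 * n + 1 + 1 := by ring
  rw [g1, g2, g3]
  simp only [Nat.factorial_succ]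
  have hf1 : ((Nat.factorial n : ℕ) : ℚ) ≠ 0 := Nat.cast_ne_zero.mpr (Nat.factorial_ne_zero _)
  have hf2 : ((Nat.factorial (2 * n) : ℕ) : ℚ) ≠ 0 :=
    Nat.cast_ne_zero.mpr (Nat.factorial_ne_zero _)
  have hf3 : ((Nat.factorial (n + 2 * n) : ℕ) : ℚ) ≠ 0 :=
    Nat.cast_ne_zero.mpr (Nat.factorial_ne_zero _)
  have d1 : (n : ℚ) + 1 ≠ 0 := by positivity
  have d2 : (2 : ℚ) + 3 * n ≠ 0 := by positivity
  have d3 : (1 : ℚ) + 3 * n ≠ 0 := by positivity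
  have d4 : (2 : ℚ) * n + 1 ≠ 0 := by positivity
  have d5 : (2 : ℚ) * n + 2 ≠ 0 := by positivity
  push_cast
  field_simp
  ring

/-- For the Fibonacci graph `G₃`, the total `G₃`-Catalan number
`c_n = c_n(1) + c_n(2)` equals `(2/(n+1)) * binom(3n, n)` for `n ≥ 1`; in particular
`c₁ = 3`, `c₂ = 10`, `c₃ = 42`, `c₄ = 198`. -/
theorem fibonacci_graph_catalan_total (c₁ c₂ : ℕ → ℕ)
    (h01 : c₁ 0 = 1) (h02 : c₂ 0 = 1)
    (hrec1 : ∀ n, c₁ (n + 1) =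
      ∑ k ∈ Finset.range (n + 1), c₁ (n - k) * (c₁ k + c₂ k))
    (hrec2 : ∀ n, c₂ (n + 1) =
      ∑ k ∈ Finset.range (n + 1), c₂ (n - k) * c₁ k) :
    (∀ n : ℕ, 1 ≤ n →
      ((c₁ n + c₂ n : ℕ) : ℚ) = (2 / (n + 1)) * (Nat.choose (3 * n) n)) ∧
    c₁ 1 + c₂ 1 = 3 ∧ c₁ 2 + c₂ 2 = 10 ∧ c₁ 3 + c₂ 3 = 42 ∧ c₁ 4 + c₂ 4 = 198 := by
  -- fgc (m+1) 1 = fgc m 3 and fgc (m+1) 2 = fgc m 3 + fgc m 4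
  have hT : ∀ m : ℕ, fgc (m + 1) 1 = fgc m 3 := by
    intro m
    have h := fgc_pascal m 0
    simpa [fgc_zero_right (m + 1) (Nat.succ_ne_zero m)] using h
  have hA : ∀ m : ℕ, fgc (m + 1) 2 = fgc m 3 + fgc m 4 := by
    intro m
    have h := fgc_pascal m 1
    rw [hT m] at h
    linarith [h]
  have key : ∀ n : ℕ, ((c₁ n : ℚ) = fgc n 2 ∧ (c₂ n : ℚ) = fgc n 1) := by
    intro n
    induction n using Nat.strong_induction_on with
    | _ n ih =>
      cases n with
      | zero => simp [h01, h02, fgc]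
      | succ m =>
        have ih1 : ∀ k, k ≤ m → (c₁ k : ℚ) = fgc k 2 := fun k hk => (ih k (by omega)).1
        have ih2 : ∀ k, k ≤ m → (c₂ k : ℚ) = fgc k 1 := fun k hk => (ih k (by omega)).2
        constructor
        · rw [hrec1 m]
          push_cast
          have e : ∑ k ∈ Finset.range (m + 1),
              ((c₁ (m - k) : ℚ) * ((c₁ k : ℚ) + (c₂ k : ℚ)))
              = (∑ k ∈ Finset.range (m + 1), fgc k 2 * fgc (m - k) 2)
              + (∑ k ∈ Finset.range (m + 1), fgc k 1 * fgc (m - k) 2) := by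
            rw [← Finset.sum_add_distrib]
            apply Finset.sum_congr rfl
            intro k hk
            have hk' : k ≤ m := by have := Finset.mem_range.mp hk; omega
            rw [ih1 _ (Nat.sub_le m k), ih1 _ hk', ih2 _ hk']
            ring
          rw [e, fgc_conv m 2 2, fgc_conv m 1 2, hA m]
          norm_num
          linarith
        · rw [hrec2 m]
          push_cast
          have e : ∑ k ∈ Finset.range (m + 1), ((c₂ (m - k) : ℚ) * (c₁ k : ℚ))
              = ∑ k ∈ Finset.range (m + 1), fgc k 2 * fgc (m - k) 1 := by
            apply Finset.sum_congr rfl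
            intro k hk
            have hk' : k ≤ m := by have := Finset.mem_range.mp hk; omega
            rw [ih2 _ (Nat.sub_le m k), ih1 _ hk']
            ring
          rw [e, fgc_conv m 2 1, hT m]
  have main : ∀ n : ℕ,
      ((c₁ n + c₂ n : ℕ) : ℚ) = (2 / ((n : ℚ) + 1)) * (Nat.choose (3 * n) n) := by
    intro n
    cases n with
    | zero => simp [h01, h02]
    | succ m =>
      push_cast [(key (m + 1)).1, (key (m + 1)).2]
      rw [fgc_closed (m + 1) (Nat.succ_ne_zero m)]
      push_cast
      ring
  refine ⟨fun n _ => main n, ?_, ?_, ?_, ?_⟩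
  · have h := main 1
    rw [show ((3 : ℕ) * 1).choose 1 = 3 from by decide] at h
    have : ((c₁ 1 + c₂ 1 : ℕ) : ℚ) = 3 := by rw [h]; norm_num
    exact_mod_cast this
  · have h := main 2
    rw [show ((3 : ℕ) * 2).choose 2 = 15 from by decide] at h
    have : ((c₁ 2 + c₂ 2 : ℕ) : ℚ) = 10 := by rw [h]; norm_num
    exact_mod_cast this
  · have h := main 3
    rw [show ((3 : ℕ) * 3).choose 3 = 84 from by decide] at h
    have : ((c₁ 3 + c₂ 3 : ℕ) : ℚ) = 42 := by rw [h]; norm_num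
    exact_mod_cast this
  · have h := main 4
    rw [show ((3 : ℕ) * 4).choose 4 = 495 from by decide] at h
    have : ((c₁ 4 + c₂ 4 : ℕ) : ℚ) = 198 := by rw [h]; norm_num
    exact_mod_cast this
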